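/- For q ≥ 7 and k ≥ 3 (over a sufficiently large field), rank((Str_q^k)^{⊗2}) ≤ 3(q+1)² < (2q)² = rank(Str_q^k)², where Str_q^k = Σ_{i=2}^{q+1} b_i⊗b_i⊗b₁⊗b₁^{⊗(k−3)} + b₁⊗b_i⊗b_i⊗b₁^{⊗(k−3)} ∈ (F^{q+1})^{⊗k}. -/

import Mathlib

open scoped BigOperators

universe u v

noncomputable section

variable {F : Type v}

/-- Tensor rank: the least `r` such that `T` is a sum of `r` simple tensors. -/
def tRank {ι : Type*} [Fintype ι] [DecidableEq ι] {γ : ι → Type*} [∀ i, Fintype (γ i)]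
    [Field F] (T : (∀ i, γ i) → F) : ℕ :=
  sInf {r | ∃ v : Fin r → ∀ i, γ i → F, ∀ x, T x = ∑ j, ∏ i, v j i (x i)}

/-- Tensor product of a `ι`-indexed tensor and a `κ`-indexed tensor (no grouping). -/
def tProd [Field F] {ι κ : Type*} {γ : ι → Type u} {δ : κ → Type u}
    (S : (∀ i, γ i) → F) (T : (∀ j, δ j) → F) : (∀ i : ι ⊕ κ, Sum.elim γ δ i) → F :=
  fun x => S (fun i => x (Sum.inl i)) * T (fun j => x (Sum.inr j))

instance sumElimFintype {ι κ : Type*} {γ : ι → Type u} {δ : κ → Type u}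
    [hγ : ∀ i, Fintype (γ i)] [hδ : ∀ j, Fintype (δ j)] :
    ∀ i : ι ⊕ κ, Fintype (Sum.elim γ δ i)
  | Sum.inl i => hγ i
  | Sum.inr j => hδ j

/-- Tensor Kronecker product of two tensors with the same index set. -/
def tKron [Field F] {ι : Type*} {γ δ : ι → Type*}
    (S : (∀ i, γ i) → F) (T : (∀ i, δ i) → F) : (∀ i, γ i × δ i) → F :=
  fun x => S (fun i => (x i).1) * T (fun i => (x i).2)

/-- `n`-fold tensor product power of a tensor (no grouping), a tensor indexed by `Fin n × ι`. -/
def tPow [Field F] {ι : Type*} {γ : ι → Type*} (T : (∀ i, γ i) → F) (n : ℕ) :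
    (∀ p : Fin n × ι, γ p.2) → F :=
  fun x => ∏ j : Fin n, T (fun i => x (j, i))

/-- Restriction `t ≥ s`: `s` is obtained from `t` by applying linear maps on each factor. -/
def Restricts [Field F] {ι : Type*} [Fintype ι] [DecidableEq ι]
    {γ : ι → Type*} {δ : ι → Type*} [∀ i, Fintype (γ i)]
    (t : (∀ i, γ i) → F) (s : (∀ i, δ i) → F) : Prop :=
  ∃ A : ∀ i, δ i → γ i → F, ∀ x, (∑ y : ∀ i, γ i, (∏ i, A i (x i) (y i)) * t y) = s x

/-- Degeneration `t ⊵_d^e s` with approximation degree `d` and error degree `e`. -/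
def Degen [Field F] {ι : Type*} [Fintype ι] [DecidableEq ι]
    {γ : ι → Type*} {δ : ι → Type*} [∀ i, Fintype (γ i)]
    (t : (∀ i, γ i) → F) (s : (∀ i, δ i) → F) (d e : ℕ) : Prop :=
  ∃ A : ∀ i, δ i → γ i → Polynomial F, ∃ s' : Fin e → ((∀ i, δ i) → F),
    ∀ x, (∑ y : ∀ i, γ i, (∏ i, A i (x i) (y i)) * Polynomial.C (t y)) =
      Polynomial.C (s x) * Polynomial.X ^ d +
      ∑ j : Fin e, Polynomial.C (s' j x) * Polynomial.X ^ (d + 1 + (j : ℕ))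

/-- The rank-`r` order-`k` unit tensor `⟨r⟩_k = ∑_j b_j^{⊗k}`. -/
def unitTensor (F : Type v) [Field F] (r k : ℕ) : (Fin k → Fin r) → F :=
  fun x => ∑ j : Fin r, ∏ i : Fin k, if x i = j then 1 else 0

/-- The tensor `W_k = ∑_{type(i)=(k-1,1)} b_{i₁} ⊗ ⋯ ⊗ b_{i_k}` in `(F²)^{⊗k}`. -/
def Wtensor (F : Type v) [Field F] (k : ℕ) : (Fin k → Fin 2) → F :=
  fun x => if (∑ i, (x i : ℕ)) = 1 then 1 else 0

/-- `R^e(s)`: border rank with error degree at most `e`. -/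
def errRank [Field F] {k : ℕ} {γ : Fin k → Type*} [∀ i, Fintype (γ i)]
    (e : ℕ) (s : (∀ i, γ i) → F) : ℕ :=
  sInf {r | ∃ d, Degen (unitTensor F r k) s d e}

/-- `R_d(s)`: border rank with approximation degree `d`. -/
def degRank [Field F] {k : ℕ} {γ : Fin k → Type*} [∀ i, Fintype (γ i)]
    (d : ℕ) (s : (∀ i, γ i) → F) : ℕ :=
  sInf {r | ∃ e, Degen (unitTensor F r k) s d e}

/-- Border rank over ℂ: the least `r` such that `T` is a limit of tensors of rank `≤ r`. -/
def tBorderRank {ι : Type*} [Fintype ι] [DecidableEq ι] {γ : ι → Type*} [∀ i, Fintype (γ i)]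
    (T : (∀ i, γ i) → ℂ) : ℕ :=
  sInf {r | T ∈ closure {T' : (∀ i, γ i) → ℂ | tRank T' ≤ r}}

end
/-- Strassen's tensor `Str_q^k = Σ_{i=2}^{q+1} b_i⊗b_i⊗b₁⊗b₁^{⊗(k−3)} + b₁⊗b_i⊗b_i⊗b₁^{⊗(k−3)}`
in `(F^{q+1})^{⊗k}` (basis indexed from 0, so `b₁` is index `0`). -/
def strTensor (F : Type v) [Field F] (q k : ℕ) (hk : 3 ≤ k) : (Fin k → Fin (q + 1)) → F :=
  fun x => ∑ i : Fin q,
    ((if (x ⟨0, by omega⟩ = i.succ ∧ x ⟨1, by omega⟩ = i.succ ∧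
          ∀ j : Fin k, 2 ≤ (j : ℕ) → x j = 0) then 1 else 0) +
     (if (x ⟨0, by omega⟩ = 0 ∧ x ⟨1, by omega⟩ = i.succ ∧ x ⟨2, by omega⟩ = i.succ ∧
          ∀ j : Fin k, 3 ≤ (j : ℕ) → x j = 0) then 1 else 0))


section AuxRank

variable {F : Type v} [Field F]

lemma boole_mul' {A B : Prop} [Decidable A] [Decidable B] :
    (if A then (1:F) else 0) * (if B then 1 else 0) = if A ∧ B then 1 else 0 := by
  by_cases hA : A <;> by_cases hB : B <;> simp [hA, hB]

lemma sum_succ_ind {q : ℕ} (v w : Fin (q+1)) :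
    (∑ i : Fin q, if v = i.succ ∧ w = i.succ then (1:F) else 0)
      = if v = w ∧ w ≠ 0 then 1 else 0 := by
  induction w using Fin.cases with
  | zero =>
    rw [Finset.sum_eq_zero]
    · simp
    · intro i _
      rw [if_neg]
      rintro ⟨-, h⟩
      exact Fin.succ_ne_zero i h.symm
  | succ i0 =>
    rw [Finset.sum_eq_single i0]
    · simp [Fin.succ_ne_zero]
    · intro i _ hne
      rw [if_neg]
      rintro ⟨-, h⟩
      exact hne (Fin.succ_injective _ h.symm)
    · intro h; exact absurd (Finset.mem_univ i0) h

lemma sum_succ_ind1 {q : ℕ} (v : Fin (q+1)) :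
    (∑ i : Fin q, if v = i.succ then (1:F) else 0) = if v ≠ 0 then 1 else 0 := by
  induction v using Fin.cases with
  | zero =>
    rw [Finset.sum_eq_zero]
    · simp
    · intro i _
      rw [if_neg]
      intro h
      exact Fin.succ_ne_zero i h.symm
  | succ i0 =>
    rw [Finset.sum_eq_single i0]
    · simp [Fin.succ_ne_zero]
    · intro i _ hne
      rw [if_neg]
      intro h
      exact hne (Fin.succ_injective _ h.symm)
    · intro h; exact absurd (Finset.mem_univ i0) h

lemma tRank_le_card {ι : Type*} [Fintype ι] [DecidableEq ι] {γ : ι → Type*}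
    [∀ i, Fintype (γ i)] (T : (∀ i, γ i) → F) (J : Type*) [Fintype J]
    (w : J → ∀ i, γ i → F) (h : ∀ x, T x = ∑ j : J, ∏ i, w j i (x i)) :
    tRank T ≤ Fintype.card J := by
  apply Nat.sInf_le
  refine ⟨fun j => w ((Fintype.equivFin J).symm j), fun x => ?_⟩
  rw [h x, ← Equiv.sum_comp (Fintype.equivFin J).symm (fun j => ∏ i, w j i (x i))]


/-- Generalized slice tensor for the substitution-method induction. -/
def Gt (q : ℕ) (U : Fin (q+1) → Fin (q+1) → F) (w : Fin (q+1) → F) :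
    Fin (q+1) → Fin (q+1) → Fin (q+1) → F :=
  fun x y z =>
    if z = 0 then ((if x = y ∧ y ≠ 0 then 1 else 0) + (if x = 0 then w y else 0))
    else (if x = 0 then U z y else 0)

lemma key_base {q r : ℕ} (w : Fin (q+1) → F) (a b c : Fin r → Fin (q+1) → F)
    (hdec : ∀ x y : Fin (q+1),
      (if x = y ∧ y ≠ 0 then (1:F) else 0) + (if x = 0 then w y else 0)
        = ∑ j, a j x * b j y * c j 0) : q ≤ r := by
  classical
  set V : Submodule F (Fin (q+1) → F) := Submodule.span F (Set.range a) with hV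
  have hfin : Module.Finite F V := Module.Finite.span_of_finite F (Set.finite_range a)
  have hr : Module.finrank F V ≤ r := by
    refine le_trans (finrank_span_le_card (Set.range a)) ?_
    rw [Set.toFinset_range]
    exact le_trans (Finset.card_image_le) (by simp)
  set col : Fin q → (Fin (q+1) → F) := fun i X =>
    (if X = i.succ ∧ i.succ ≠ (0 : Fin (q+1)) then (1:F) else 0)
      + (if X = 0 then w i.succ else 0) with hcol
  have hmem : ∀ i, col i ∈ V := by
    intro i
    have h1 : col i = ∑ j, (b j i.succ * c j 0) • a j := by
      funext X
      rw [hcol]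
      simp only [Finset.sum_apply, Pi.smul_apply, smul_eq_mul]
      rw [hdec X i.succ]
      exact Finset.sum_congr rfl fun j _ => by ring
    rw [h1]
    exact Submodule.sum_mem _ fun j _ =>
      Submodule.smul_mem _ _ (Submodule.subset_span ⟨j, rfl⟩)
  have hindep : LinearIndependent F col := by
    rw [Fintype.linearIndependent_iff]
    intro g hg i0
    have hg' := congrFun hg i0.succ
    simp only [Finset.sum_apply, Pi.smul_apply, Pi.zero_apply, smul_eq_mul, hcol] at hg'
    rw [Finset.sum_eq_single i0] at hg'
    · simpa [Fin.succ_ne_zero] using hg'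
    · intro i _ hne
      rw [if_neg, if_neg (Fin.succ_ne_zero i0), mul_comm]
      · ring
      · rintro ⟨h, -⟩
        exact hne (Fin.succ_injective _ h).symm
    · intro h; exact absurd (Finset.mem_univ i0) h
  have hindepV : LinearIndependent F (fun i => (⟨col i, hmem i⟩ : V)) := by
    apply LinearIndependent.of_comp V.subtype
    exact hindep
  calc q = Fintype.card (Fin q) := by simp
    _ ≤ Module.finrank F V := hindepV.fintype_card_le_finrank
    _ ≤ r := hr

lemma key {q : ℕ} : ∀ (n : ℕ) (S : Finset (Fin (q+1))), S.card = n →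
    (0 : Fin (q+1)) ∉ S →
    ∀ (U : Fin (q+1) → Fin (q+1) → F) (w : Fin (q+1) → F),
    (∀ z, z ∉ S → U z = 0) →
    (∀ g : Fin (q+1) → F, (∑ z ∈ S, g z • U z) = 0 → ∀ z ∈ S, g z = 0) →
    ∀ (r : ℕ) (a b c : Fin r → Fin (q+1) → F),
    (∀ x y z, Gt q U w x y z = ∑ j, a j x * b j y * c j z) → q + n ≤ r := by
  intro n
  induction n with
  | zero =>
    intro S hcard h0 U w hU hindep r a b c hdec
    have hS : S = ∅ := Finset.card_eq_zero.mp hcard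
    subst hS
    rw [Nat.add_zero]
    refine key_base w a b c fun x y => ?_
    have := hdec x y 0
    simpa [Gt] using this
  | succ n ih =>
    intro S hcard h0 U w hU hindep r a b c hdec
    classical
    have hSne : S.Nonempty := Finset.card_pos.mp (by omega)
    obtain ⟨z0, hz0⟩ := hSne
    have hz0ne : z0 ≠ 0 := fun h => h0 (h ▸ hz0)
    have hUz0 : U z0 ≠ 0 := by
      intro h
      have h1 := hindep (fun z => if z = z0 then 1 else 0) ?_ z0 hz0
      · simp at h1
      · rw [Finset.sum_eq_single z0]
        · simp [h]
        · intro z _ hne; simp [hne]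
        · intro h'; exact absurd hz0 h'
    obtain ⟨y0, hy0⟩ : ∃ y, U z0 y ≠ 0 := by
      by_contra hcon
      push_neg at hcon
      exact hUz0 (funext hcon)
    have hsum : (∑ j, a j 0 * b j y0 * c j z0) ≠ 0 := by
      rw [← hdec 0 y0 z0]
      simpa [Gt, hz0ne] using hy0
    obtain ⟨js, -, hjs⟩ := Finset.exists_ne_zero_of_sum_ne_zero hsum
    have hcjs : c js z0 ≠ 0 := fun h => hjs (by rw [h, mul_zero])
    obtain ⟨r', rfl⟩ : ∃ r', r = r' + 1 := by
      cases r with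
      | zero => exact js.elim0
      | succ r' => exact ⟨r', rfl⟩
    set μ : Fin (q+1) → F := fun z => c js z / c js z0 with hμ
    set U' : Fin (q+1) → Fin (q+1) → F := fun z =>
      if z ∈ S ∧ z ≠ z0 then (fun y => U z y - μ z * U z0 y) else 0 with hU'
    set w' : Fin (q+1) → F := fun y => w y - μ 0 * U z0 y with hw'
    set c' : Fin (r'+1) → Fin (q+1) → F := fun j z =>
      if (z ∈ S ∧ z ≠ z0) ∨ z = 0 then c j z - μ z * c j z0 else 0 with hc'
    have hc'js : ∀ z, c' js z = 0 := by
      intro z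
      rw [hc']
      dsimp only
      split
      · rw [hμ]; dsimp only; field_simp; ring
      · rfl
    have hdec' : ∀ x y z, Gt q U' w' x y z = ∑ j, a j x * b j y * c' j z := by
      intro x y z
      by_cases hz : (z ∈ S ∧ z ≠ z0) ∨ z = 0
      · have expand : (∑ j, a j x * b j y * c' j z)
            = (∑ j, a j x * b j y * c j z) - μ z * (∑ j, a j x * b j y * c j z0) := by
          rw [Finset.mul_sum, ← Finset.sum_sub_distrib]
          refine Finset.sum_congr rfl fun j _ => ?_
          rw [hc']; dsimp only; rw [if_pos hz]; ring
        rw [expand, ← hdec, ← hdec]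
        rcases hz with ⟨hzS, hzne⟩ | rfl
        · have hzne0 : z ≠ 0 := fun h => h0 (h ▸ hzS)
          simp only [Gt, if_neg hzne0, if_neg hz0ne]
          by_cases hx : x = 0 <;> simp [hx, hU', hzS, hzne]
        · simp only [Gt, if_pos rfl, if_neg hz0ne]
          by_cases hx : x = 0 <;> simp [hx, hw'] <;> ring
      · have hU'z : U' z = 0 := by
          rw [hU']; dsimp only
          rw [if_neg (fun h => hz (Or.inl h))]
        have hzne0 : z ≠ 0 := fun h => hz (Or.inr h)
        have hrhs : ∀ j : Fin (r'+1), a j x * b j y * c' j z = 0 := by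
          intro j
          rw [hc']; dsimp only; rw [if_neg hz, mul_zero]
        rw [Finset.sum_congr rfl fun j _ => hrhs j]
        simp [Gt, if_neg hzne0, hU'z]
    have hstep : q + n ≤ r' := by
      refine ih (S.erase z0) ?_ (fun h => h0 (Finset.mem_of_mem_erase h)) U' w' ?_ ?_ r'
        (fun i => a (js.succAbove i)) (fun i => b (js.succAbove i))
        (fun i => c' (js.succAbove i)) ?_
      · rw [Finset.card_erase_of_mem hz0, hcard]; omega
      · intro z hzE
        rw [hU']; dsimp only
        rw [if_neg]
        intro ⟨h1, h2⟩
        exact hzE (Finset.mem_erase.mpr ⟨h2, h1⟩)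
      · intro g hg z hzE
        set h : Fin (q+1) → F := fun z =>
          if z = z0 then -(∑ z' ∈ S.erase z0, g z' * μ z') else g z with hh
        have hrw : ∀ z' ∈ S.erase z0,
            g z' • U' z' = g z' • U z' - (g z' * μ z') • U z0 := by
          intro z' hz'
          rw [Finset.mem_erase] at hz'
          rw [hU']; dsimp only; rw [if_pos ⟨hz'.2, hz'.1⟩]
          funext y
          simp only [Pi.smul_apply, Pi.sub_apply, smul_eq_mul]
          ring
        have hg2 : (∑ z' ∈ S.erase z0, g z' • U z')
            - (∑ z' ∈ S.erase z0, g z' * μ z') • U z0 = 0 := by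
          rw [Finset.sum_smul, ← Finset.sum_sub_distrib]
          rw [Finset.sum_congr rfl fun z' hz' => (hrw z' hz').symm]
          exact hg
        have hcongr : (∑ z' ∈ S.erase z0, h z' • U z')
            = ∑ z' ∈ S.erase z0, g z' • U z' :=
          Finset.sum_congr rfl fun z' hz' => by
            simp [hh, (Finset.mem_erase.mp hz').1]
        have key0 : (∑ z' ∈ S, h z' • U z') = 0 := by
          rw [← Finset.add_sum_erase _ _ hz0, hcongr]
          have hz0v : h z0 = -(∑ z' ∈ S.erase z0, g z' * μ z') := by simp [hh]
          rw [hz0v, neg_smul, neg_add_eq_sub]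
          exact hg2
        have hfin := hindep h key0 z (Finset.mem_of_mem_erase hzE)
        simpa [hh, (Finset.mem_erase.mp hzE).1] using hfin
      · intro x y z
        rw [hdec' x y z, Fin.sum_univ_succAbove _ js, hc'js z, mul_zero, zero_add]
    omega


lemma str_lower {q m r : ℕ} (hk : 3 ≤ m + 3)
    (v : Fin r → (l : Fin (m+3)) → Fin (q+1) → F)
    (hv : ∀ x, strTensor F q (m+3) hk x = ∑ j, ∏ l, v j l (x l)) : 2 * q ≤ r := by
  classical
  set U0 : Fin (q+1) → Fin (q+1) → F := fun z y => if y = z ∧ z ≠ 0 then 1 else 0 with hU0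
  set S0 : Finset (Fin (q+1)) := Finset.univ.erase 0 with hS0
  set a : Fin r → Fin (q+1) → F := fun j => v j 0 with ha
  set b : Fin r → Fin (q+1) → F := fun j => v j (Fin.succ 0) with hb
  set c : Fin r → Fin (q+1) → F := fun j Z =>
    v j (Fin.succ (Fin.succ 0)) Z * ∏ l : Fin m, v j (Fin.succ (Fin.succ (Fin.succ l))) 0 with hc
  have hdec : ∀ X Y Z, Gt q U0 0 X Y Z = ∑ j, a j X * b j Y * c j Z := by
    intro X Y Z
    set x : Fin (m+3) → Fin (q+1) := fun l =>
      if (l:ℕ) = 0 then X else if (l:ℕ) = 1 then Y else if (l:ℕ) = 2 then Z else 0 with hx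
    have hx0 : x 0 = X := by simp [hx]
    have hx1 : x (Fin.succ 0) = Y := by simp [hx, Fin.val_succ]
    have hx2 : x (Fin.succ (Fin.succ 0)) = Z := by show x ⟨2, by omega⟩ = Z; simp [hx]
    have hx0' : x ⟨0, by omega⟩ = X := hx0
    have hx1' : x ⟨1, by omega⟩ = Y := by
      rw [show (⟨1, by omega⟩ : Fin (m+3)) = Fin.succ 0 from rfl]; exact hx1
    have hx2' : x ⟨2, by omega⟩ = Z := by
      rw [show (⟨2, by omega⟩ : Fin (m+3)) = Fin.succ (Fin.succ 0) from rfl]; exact hx2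
    have hxl : ∀ l : Fin m, x (Fin.succ (Fin.succ (Fin.succ l))) = 0 := by
      intro l
      simp only [hx, Fin.val_succ]
      rw [if_neg (by omega), if_neg (by omega), if_neg (by omega)]
    have hall2 : (∀ j : Fin (m+3), 2 ≤ (j:ℕ) → x j = 0) ↔ Z = 0 := by
      constructor
      · intro hj
        have h2 := hj ⟨2, by omega⟩ (by norm_num)
        rwa [hx2'] at h2
      · intro hZ j hj
        simp only [hx]
        rw [if_neg (by omega), if_neg (by omega)]
        split
        · exact hZ
        · rfl
    have hall3 : ∀ j : Fin (m+3), 3 ≤ (j:ℕ) → x j = 0 := by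
      intro j hj
      simp only [hx]
      rw [if_neg (by omega), if_neg (by omega), if_neg (by omega)]
    have hmain := hv x
    have hL : strTensor F q (m+3) hk x
        = ∑ i : Fin q, ((if X = i.succ ∧ Y = i.succ ∧ Z = 0 then (1:F) else 0)
            + (if X = 0 ∧ Y = i.succ ∧ Z = i.succ then 1 else 0)) := by
      unfold strTensor
      refine Finset.sum_congr rfl fun i _ => ?_
      congr 1
      · refine if_congr ?_ rfl rfl
        rw [hx0', hx1']
        exact and_congr_right fun _ => and_congr_right fun _ => hall2
      · refine if_congr ?_ rfl rfl
        rw [hx0', hx1', hx2']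
        constructor
        · rintro ⟨h1, h2, h3, -⟩; exact ⟨h1, h2, h3⟩
        · rintro ⟨h1, h2, h3⟩; exact ⟨h1, h2, h3, hall3⟩
    have hR : (∑ j, ∏ l, v j l (x l)) = ∑ j, a j X * b j Y * c j Z := by
      refine Finset.sum_congr rfl fun j _ => ?_
      rw [Fin.prod_univ_succ, Fin.prod_univ_succ, Fin.prod_univ_succ]
      rw [Finset.prod_congr rfl fun l (_ : l ∈ Finset.univ) => by rw [hxl l]]
      rw [hx0, hx1, hx2, ha, hb, hc]
      ring
    rw [← hR, ← hmain, hL]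
    by_cases hZ : Z = 0
    · subst hZ
      have h1 : ∀ i : Fin q, ((if X = i.succ ∧ Y = i.succ ∧ (0:Fin (q+1)) = 0 then (1:F) else 0)
          + (if X = 0 ∧ Y = i.succ ∧ (0:Fin (q+1)) = i.succ then 1 else 0))
          = (if X = i.succ ∧ Y = i.succ then 1 else 0) := by
        intro i
        have hz2 : (if X = 0 ∧ Y = i.succ ∧ (0:Fin (q+1)) = i.succ then (1:F) else 0) = 0 := by
          rw [if_neg]; rintro ⟨-, -, h⟩; exact Fin.succ_ne_zero i h.symm
        rw [hz2, add_zero]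
        exact if_congr (by simp) rfl rfl
      rw [Finset.sum_congr rfl fun i _ => h1 i, sum_succ_ind X Y]
      simp [Gt]
    · have h1 : ∀ i : Fin q, ((if X = i.succ ∧ Y = i.succ ∧ Z = 0 then (1:F) else 0)
          + (if X = 0 ∧ Y = i.succ ∧ Z = i.succ then 1 else 0))
          = (if X = 0 then (1:F) else 0) * (if Y = i.succ ∧ Z = i.succ then 1 else 0) := by
        intro i
        have hz1 : (if X = i.succ ∧ Y = i.succ ∧ Z = 0 then (1:F) else 0) = 0 := by
          rw [if_neg]; rintro ⟨-, -, h⟩; exact hZ h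
        rw [hz1, zero_add, boole_mul']
      rw [Finset.sum_congr rfl fun i _ => h1 i, ← Finset.mul_sum, sum_succ_ind Y Z]
      simp only [Gt, if_neg hZ, hU0]
      by_cases hX : X = 0 <;> simp [hX]
  have hcardS0 : S0.card = q := by
    rw [hS0, Finset.card_erase_of_mem (Finset.mem_univ 0)]
    simp
  have hq2 : q + q ≤ r := by
    refine key q S0 hcardS0 (Finset.notMem_erase 0 _) U0 0 ?_ ?_ r a b c hdec
    · intro z hz
      have hz0 : z = 0 := by
        by_contra hne
        exact hz (Finset.mem_erase.mpr ⟨hne, Finset.mem_univ z⟩)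
      subst hz0
      funext y
      simp [hU0]
    · intro g hg z1 hz1
      have hz1ne : z1 ≠ 0 := (Finset.mem_erase.mp hz1).1
      have := congrFun hg z1
      simp only [Finset.sum_apply, Pi.smul_apply, Pi.zero_apply, smul_eq_mul] at this
      rw [Finset.sum_eq_single z1] at this
      · simpa [hU0, hz1ne] using this
      · intro z hz hne
        have hzne : z ≠ 0 := (Finset.mem_erase.mp hz).1
        rw [hU0]
        simp only
        rw [if_neg, mul_zero]
        rintro ⟨h, -⟩
        exact hne h.symm
      · intro h; exact absurd hz1 h
  omega


lemma decomp_mem {ι : Type*} [Fintype ι] [DecidableEq ι] {γ : ι → Type*}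
    [∀ i, Fintype (γ i)] (T : (∀ i, γ i) → F) (J : Type*) [Fintype J]
    (w : J → ∀ i, γ i → F) (h : ∀ x, T x = ∑ j : J, ∏ i, w j i (x i)) :
    Fintype.card J ∈ {r | ∃ v : Fin r → ∀ i, γ i → F, ∀ x, T x = ∑ j, ∏ i, v j i (x i)} := by
  refine ⟨fun j => w ((Fintype.equivFin J).symm j), fun x => ?_⟩
  rw [h x, ← Equiv.sum_comp (Fintype.equivFin J).symm (fun j => ∏ i, w j i (x i))]

/-- The explicit rank-`2q` decomposition of the Strassen tensor. -/
def strW (F : Type v) [Field F] (q m : ℕ) : (Fin 2 × Fin q) → Fin (m+3) → Fin (q+1) → F :=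
  fun p l y =>
    if p.1 = 0 then
      (if ((l:ℕ) ≤ 1 ∧ y = p.2.succ) ∨ (2 ≤ (l:ℕ) ∧ y = 0) then 1 else 0)
    else
      (if ((l:ℕ) = 0 ∧ y = 0) ∨ ((1 ≤ (l:ℕ) ∧ (l:ℕ) ≤ 2) ∧ y = p.2.succ)
          ∨ (3 ≤ (l:ℕ) ∧ y = 0) then 1 else 0)

lemma str_decomp {q m : ℕ} (hk : 3 ≤ m + 3) :
    ∀ x, strTensor F q (m+3) hk x
      = ∑ p : Fin 2 × Fin q, ∏ l : Fin (m+3), strW F q m p l (x l) := by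
  intro x
  rw [Fintype.sum_prod_type, Fin.sum_univ_two]
  unfold strTensor
  rw [Finset.sum_add_distrib]
  congr 1
  · refine Finset.sum_congr rfl fun i _ => ?_
    have hW : ∀ l : Fin (m+3), strW F q m (0, i) l (x l)
        = if ((l:ℕ) ≤ 1 ∧ x l = i.succ) ∨ (2 ≤ (l:ℕ) ∧ x l = 0) then (1:F) else 0 := by
      intro l; simp [strW]
    rw [Finset.prod_congr rfl fun l _ => hW l, Fintype.prod_boole]
    have hiff : (∀ l : Fin (m+3), ((l:ℕ) ≤ 1 ∧ x l = i.succ) ∨ (2 ≤ (l:ℕ) ∧ x l = 0)) ↔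
        (x ⟨0, by omega⟩ = i.succ ∧ x ⟨1, by omega⟩ = i.succ ∧
          ∀ j : Fin (m+3), 2 ≤ (j:ℕ) → x j = 0) := by
      constructor
      case mpr
      · rintro ⟨h0, h1, h2⟩ l
        by_cases hl : (l:ℕ) ≤ 1
        · left
          refine ⟨hl, ?_⟩
          have hcase : l = (⟨0, by omega⟩ : Fin (m+3)) ∨ l = (⟨1, by omega⟩ : Fin (m+3)) := by
            rcases Nat.lt_or_ge (l:ℕ) 1 with h | h
            · left; exact Fin.ext (show (l:ℕ) = 0 by omega)
            · right; exact Fin.ext (show (l:ℕ) = 1 by omega)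
          rcases hcase with h | h
          · rw [h]; exact h0
          · rw [h]; exact h1
        · right; exact ⟨by omega, h2 l (by omega)⟩
      case mp
      · intro h
        refine ⟨?_, ?_, fun j hj => ?_⟩
        · rcases h ⟨0, by omega⟩ with ⟨-, h'⟩ | ⟨h', -⟩
          · exact h'
          · exact absurd h' (by simp)
        · rcases h ⟨1, by omega⟩ with ⟨-, h'⟩ | ⟨h', -⟩
          · exact h'
          · exact absurd h' (by simp)
        · rcases h j with ⟨h', -⟩ | ⟨-, h'⟩
          · exact absurd h' (by omega)
          · exact h'
    simp only [hiff]
  · refine Finset.sum_congr rfl fun i _ => ?_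
    have hW : ∀ l : Fin (m+3), strW F q m (1, i) l (x l)
        = if ((l:ℕ) = 0 ∧ x l = 0) ∨ ((1 ≤ (l:ℕ) ∧ (l:ℕ) ≤ 2) ∧ x l = i.succ)
            ∨ (3 ≤ (l:ℕ) ∧ x l = 0) then (1:F) else 0 := by
      intro l; simp [strW]
    rw [Finset.prod_congr rfl fun l _ => hW l, Fintype.prod_boole]
    have hiff : (∀ l : Fin (m+3), ((l:ℕ) = 0 ∧ x l = 0)
          ∨ ((1 ≤ (l:ℕ) ∧ (l:ℕ) ≤ 2) ∧ x l = i.succ) ∨ (3 ≤ (l:ℕ) ∧ x l = 0)) ↔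
        (x ⟨0, by omega⟩ = 0 ∧ x ⟨1, by omega⟩ = i.succ ∧ x ⟨2, by omega⟩ = i.succ ∧
          ∀ j : Fin (m+3), 3 ≤ (j:ℕ) → x j = 0) := by
      constructor
      case mpr
      · rintro ⟨h0, h1, h2, h3⟩ l
        by_cases hl0 : (l:ℕ) = 0
        · left
          refine ⟨hl0, ?_⟩
          rw [show l = (⟨0, by omega⟩ : Fin (m+3)) from Fin.ext hl0]
          exact h0
        · by_cases hl2 : (l:ℕ) ≤ 2
          · right; left
            refine ⟨⟨by omega, hl2⟩, ?_⟩
            have hcase : l = (⟨1, by omega⟩ : Fin (m+3)) ∨ l = (⟨2, by omega⟩ : Fin (m+3)) := by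
              rcases Nat.lt_or_ge (l:ℕ) 2 with h | h
              · left; exact Fin.ext (show (l:ℕ) = 1 by omega)
              · right; exact Fin.ext (show (l:ℕ) = 2 by omega)
            rcases hcase with h | h
            · rw [h]; exact h1
            · rw [h]; exact h2
          · right; right; exact ⟨by omega, h3 l (by omega)⟩
      case mp
      · intro h
        refine ⟨?_, ?_, ?_, fun j hj => ?_⟩
        · rcases h ⟨0, by omega⟩ with ⟨-, h'⟩ | ⟨⟨h', -⟩, -⟩ | ⟨h', -⟩
          · exact h'
          · exact absurd h' (by simp)
          · exact absurd h' (by simp)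
        · rcases h ⟨1, by omega⟩ with ⟨h', -⟩ | ⟨-, h'⟩ | ⟨h', -⟩
          · exact absurd h' (by simp)
          · exact h'
          · exact absurd h' (by simp)
        · rcases h ⟨2, by omega⟩ with ⟨h', -⟩ | ⟨-, h'⟩ | ⟨h', -⟩
          · exact absurd h' (by simp)
          · exact h'
          · exact absurd h' (by simp)
        · rcases h j with ⟨h', -⟩ | ⟨⟨-, h'⟩, -⟩ | ⟨-, h'⟩
          · exact absurd h' (by omega)
          · exact absurd h' (by omega)
          · exact h'
    simp only [hiff]

lemma str_rank_eq {q m : ℕ} (hk : 3 ≤ m + 3) :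
    tRank (strTensor F q (m+3) hk) = 2 * q := by
  apply le_antisymm
  · have h := tRank_le_card (strTensor F q (m+3) hk) (Fin 2 × Fin q)
      (strW F q m) (str_decomp hk)
    simpa [Fintype.card_prod] using h
  · unfold tRank
    refine le_csInf ⟨Fintype.card (Fin 2 × Fin q),
      decomp_mem (strTensor F q (m+3) hk) (Fin 2 × Fin q) (strW F q m) (str_decomp hk)⟩ ?_
    rintro r ⟨v, hv⟩
    exact str_lower hk v hv


/-- Error tensor `E = Σ_i e_{i+1}⊗e_{i+1}⊗e_{i+1}⊗e_0^{⊗(k−3)}`. -/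
def Etens (F : Type v) [Field F] (q m : ℕ) : (Fin (m+3) → Fin (q+1)) → F :=
  fun x => ∑ i : Fin q,
    if ((x 0 : ℕ) = (i:ℕ)+1 ∧ (x (Fin.succ 0) : ℕ) = (i:ℕ)+1
        ∧ (x (Fin.succ 0).succ : ℕ) = (i:ℕ)+1
        ∧ ∀ l : Fin m, x l.succ.succ.succ = 0) then 1 else 0

/-- The `(q+1)`-term border-rank family: `ε·Str + ε²·E` as a sum of `q+1` simple tensors. -/
def Wfam (F : Type v) [Field F] (q m : ℕ) (ε : F) :
    Fin (q+1) → Fin (m+3) → Fin (q+1) → F :=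
  fun p l y =>
    if (p:ℕ) < q then
      (if (l:ℕ) = 0 ∨ (l:ℕ) = 2 then
        ((if y = 0 then 1 else 0) + ε * (if (y:ℕ) = (p:ℕ)+1 then 1 else 0))
      else if (l:ℕ) = 1 then (if (y:ℕ) = (p:ℕ)+1 then 1 else 0)
      else (if y = 0 then 1 else 0))
    else
      (if (l:ℕ) = 0 then -(if y = 0 then 1 else 0)
      else if (l:ℕ) = 1 then (if y = 0 then 0 else 1)
      else (if y = 0 then 1 else 0))

lemma sum_succ_val {q : ℕ} (y : Fin (q+1)) :
    (∑ i : Fin q, if (y:ℕ) = (i:ℕ)+1 then (1:F) else 0)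
      = if y = 0 then 0 else 1 := by
  have h1 : ∀ i : Fin q, (if (y:ℕ) = (i:ℕ)+1 then (1:F) else 0)
      = if y = i.succ then 1 else 0 :=
    fun i => if_congr (by rw [Fin.ext_iff, Fin.val_succ]) rfl rfl
  rw [Finset.sum_congr rfl fun i _ => h1 i, sum_succ_ind1]
  by_cases hy : y = 0 <;> simp [hy]

lemma boole4 {m : ℕ} (P1 P2 P3 : Prop) [Decidable P1] [Decidable P2] [Decidable P3]
    (R : Fin m → Prop) [∀ l, Decidable (R l)] :
    (if P1 ∧ P2 ∧ P3 ∧ (∀ l, R l) then (1:F) else 0)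
      = (if P1 then 1 else 0) * ((if P2 then 1 else 0)
          * ((if P3 then 1 else 0) * ∏ l, (if R l then (1:F) else 0))) := by
  by_cases h1 : P1 <;> by_cases h2 : P2 <;> by_cases h3 : P3 <;>
    by_cases h4 : ∀ l, R l <;>
    simp [h1, h2, h3, h4, Fintype.prod_boole]

lemma Wfam_sum {q m : ℕ} (hk : 3 ≤ m + 3) (ε : F) (x : Fin (m+3) → Fin (q+1)) :
    (∑ p : Fin (q+1), ∏ l, Wfam F q m ε p l (x l))
      = ε * strTensor F q (m+3) hk x + ε^2 * Etens F q m x := by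
  classical
  set D0 : F := (if x 0 = 0 then (1:F) else 0) with hD0
  set D2 : F := (if x (Fin.succ 0).succ = 0 then (1:F) else 0) with hD2
  set N1 : F := (if x (Fin.succ 0) = 0 then (0:F) else 1) with hN1
  set R : F := ∏ l : Fin m, (if x l.succ.succ.succ = 0 then (1:F) else 0) with hRdef
  set A0 : Fin q → F := fun i => if (x 0 : ℕ) = (i:ℕ)+1 then 1 else 0 with hA0
  set A1 : Fin q → F := fun i => if (x (Fin.succ 0) : ℕ) = (i:ℕ)+1 then 1 else 0 with hA1
  set A2 : Fin q → F := fun i => if (x (Fin.succ 0).succ : ℕ) = (i:ℕ)+1 then 1 else 0 with hA2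
  -- conversion of strTensor to peeled form
  have hall2 : ∀ i : Fin q,
      (x ⟨0, by omega⟩ = i.succ ∧ x ⟨1, by omega⟩ = i.succ
        ∧ ∀ j : Fin (m+3), 2 ≤ (j:ℕ) → x j = 0)
      ↔ ((x 0 : ℕ) = (i:ℕ)+1 ∧ (x (Fin.succ 0) : ℕ) = (i:ℕ)+1
          ∧ x (Fin.succ 0).succ = 0 ∧ ∀ l : Fin m, x l.succ.succ.succ = 0) := by
    intro i
    constructor
    · rintro ⟨h0, h1, h2⟩
      refine ⟨by rw [show x 0 = x ⟨0, by omega⟩ from rfl, h0, Fin.val_succ],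
        by rw [show x (Fin.succ 0) = x ⟨1, by omega⟩ from rfl, h1, Fin.val_succ],
        h2 ⟨2, by omega⟩ (by norm_num), fun l => h2 l.succ.succ.succ (by simp [Fin.val_succ])⟩
    · rintro ⟨h0, h1, h2, h3⟩
      refine ⟨by rw [show x ⟨0, by omega⟩ = x 0 from rfl]; exact Fin.ext (by rw [h0, Fin.val_succ]),
        by rw [show x ⟨1, by omega⟩ = x (Fin.succ 0) from rfl]; exact Fin.ext (by rw [h1, Fin.val_succ]),
        ?_⟩
      intro j hj
      by_cases hj2 : (j:ℕ) = 2
      · rw [show j = (Fin.succ 0).succ from Fin.ext hj2]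
        exact h2
      · have hj3 : 3 ≤ (j:ℕ) := by omega
        have hje : j = (⟨(j:ℕ) - 3, by omega⟩ : Fin m).succ.succ.succ := by
          apply Fin.ext
          simp only [Fin.val_succ]
          omega
        rw [hje]
        exact h3 _
  have hall3 : ∀ i : Fin q,
      (x ⟨0, by omega⟩ = 0 ∧ x ⟨1, by omega⟩ = i.succ ∧ x ⟨2, by omega⟩ = i.succ
        ∧ ∀ j : Fin (m+3), 3 ≤ (j:ℕ) → x j = 0)
      ↔ (x 0 = 0 ∧ (x (Fin.succ 0) : ℕ) = (i:ℕ)+1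
          ∧ (x (Fin.succ 0).succ : ℕ) = (i:ℕ)+1 ∧ ∀ l : Fin m, x l.succ.succ.succ = 0) := by
    intro i
    constructor
    · rintro ⟨h0, h1, h2, h3⟩
      exact ⟨h0,
        by rw [show x (Fin.succ 0) = x ⟨1, by omega⟩ from rfl, h1, Fin.val_succ],
        by rw [show x (Fin.succ 0).succ = x ⟨2, by omega⟩ from rfl, h2, Fin.val_succ],
        fun l => h3 l.succ.succ.succ (by simp [Fin.val_succ])⟩
    · rintro ⟨h0, h1, h2, h3⟩
      refine ⟨h0,
        by rw [show x ⟨1, by omega⟩ = x (Fin.succ 0) from rfl]; exact Fin.ext (by rw [h1, Fin.val_succ]),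
        by rw [show x ⟨2, by omega⟩ = x (Fin.succ 0).succ from rfl]; exact Fin.ext (by rw [h2, Fin.val_succ]),
        ?_⟩
      intro j hj
      have hje : j = (⟨(j:ℕ) - 3, by omega⟩ : Fin m).succ.succ.succ := by
        apply Fin.ext
        simp only [Fin.val_succ]
        omega
      rw [hje]
      exact h3 _
  have hstr : strTensor F q (m+3) hk x = ∑ i : Fin q,
      ((A0 i * (A1 i * (D2 * R))) + (D0 * (A1 i * (A2 i * R)))) := by
    unfold strTensor
    refine Finset.sum_congr rfl fun i _ => ?_
    congr 1
    · rw [if_congr (hall2 i) rfl rfl]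
      exact boole4 _ _ _ _
    · rw [if_congr (hall3 i) rfl rfl]
      exact boole4 _ _ _ _
  -- the last (correction) term
  have hlast : (∏ l, Wfam F q m ε (Fin.last q) l (x l)) = (-D0) * (N1 * (D2 * R)) := by
    rw [Fin.prod_univ_succ, Fin.prod_univ_succ, Fin.prod_univ_succ]
    have hnot : ¬ ((Fin.last q : Fin (q+1)) : ℕ) < q := by simp
    congr 1
    · simp [Wfam, hnot, hD0]
    congr 1
    · simp [Wfam, hnot, hN1, Fin.val_succ]
    congr 1
    · simp [Wfam, hnot, hD2, Fin.val_succ, Nat.mod_eq_of_lt (show 2 < m+3 by omega)]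
    · exact Finset.prod_congr rfl fun l _ => by simp [Wfam, hnot, Fin.val_succ]
  -- the generic terms
  have hPi : ∀ i : Fin q, (∏ l, Wfam F q m ε (Fin.castSucc i) l (x l))
      = (D0 + ε * A0 i) * (A1 i * ((D2 + ε * A2 i) * R)) := by
    intro i
    have hc : ((Fin.castSucc i : Fin (q+1)) : ℕ) < q := by simp [Fin.coe_castSucc]
    rw [Fin.prod_univ_succ, Fin.prod_univ_succ, Fin.prod_univ_succ]
    congr 1
    · simp [Wfam, hc, hD0, hA0]
    congr 1
    · simp [Wfam, hc, hA1, Fin.val_succ]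
    congr 1
    · simp [Wfam, hc, hD2, hA2, Fin.val_succ]
    · exact Finset.prod_congr rfl fun l _ => by simp [Wfam, hc, Fin.val_succ]
  rw [Fin.sum_univ_castSucc, hlast, Finset.sum_congr rfl fun i _ => hPi i]
  have hexp : ∀ i : Fin q, (D0 + ε * A0 i) * (A1 i * ((D2 + ε * A2 i) * R))
      = (ε * (A0 i * (A1 i * (D2 * R))) + ε * (D0 * (A1 i * (A2 i * R)))
          + ε^2 * (A0 i * (A1 i * (A2 i * R)))) + D0 * (A1 i * (D2 * R)) :=
    fun i => by ring
  rw [Finset.sum_congr rfl fun i _ => hexp i, Finset.sum_add_distrib,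
    Finset.sum_add_distrib, Finset.sum_add_distrib]
  have hJ : (∑ i : Fin q, D0 * (A1 i * (D2 * R))) = D0 * (N1 * (D2 * R)) := by
    rw [← Finset.mul_sum]
    congr 1
    rw [← Finset.sum_mul, hA1]
    congr 1
    exact sum_succ_val (x (Fin.succ 0))
  have hE : Etens F q m x = ∑ i : Fin q, A0 i * (A1 i * (A2 i * R)) := by
    unfold Etens
    exact Finset.sum_congr rfl fun i _ => boole4 _ _ _ _
  rw [hJ, hstr, hE,
    show (∑ i : Fin q, ε * (A0 i * (A1 i * (D2 * R))))
      = ε * ∑ i : Fin q, A0 i * (A1 i * (D2 * R)) from (Finset.mul_sum _ _ _).symm,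
    show (∑ i : Fin q, ε * (D0 * (A1 i * (A2 i * R))))
      = ε * ∑ i : Fin q, D0 * (A1 i * (A2 i * R)) from (Finset.mul_sum _ _ _).symm,
    show (∑ i : Fin q, ε^2 * (A0 i * (A1 i * (A2 i * R))))
      = ε^2 * ∑ i : Fin q, A0 i * (A1 i * (A2 i * R)) from (Finset.mul_sum _ _ _).symm,
    Finset.sum_add_distrib]
  ring


lemma exists3 (e : Fin 4 ↪ F) :
    ∃ a b c : F, a ≠ 0 ∧ b ≠ 0 ∧ c ≠ 0 ∧ a ≠ b ∧ a ≠ c ∧ b ≠ c := by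
  classical
  have hne : ∀ i j : Fin 4, i ≠ j → e i ≠ e j := fun i j hij h => hij (e.injective h)
  by_cases h0 : e 0 = 0
  · exact ⟨e 1, e 2, e 3,
      fun h => hne 1 0 (by decide) (h.trans h0.symm),
      fun h => hne 2 0 (by decide) (h.trans h0.symm),
      fun h => hne 3 0 (by decide) (h.trans h0.symm),
      hne 1 2 (by decide), hne 1 3 (by decide), hne 2 3 (by decide)⟩
  · by_cases h1 : e 1 = 0
    · exact ⟨e 0, e 2, e 3,
        fun h => hne 0 1 (by decide) (h.trans h1.symm),
        fun h => hne 2 1 (by decide) (h.trans h1.symm),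
        fun h => hne 3 1 (by decide) (h.trans h1.symm),
        hne 0 2 (by decide), hne 0 3 (by decide), hne 2 3 (by decide)⟩
    · by_cases h2 : e 2 = 0
      · exact ⟨e 0, e 1, e 3,
          fun h => hne 0 2 (by decide) (h.trans h2.symm),
          fun h => hne 1 2 (by decide) (h.trans h2.symm),
          fun h => hne 3 2 (by decide) (h.trans h2.symm),
          hne 0 1 (by decide), hne 0 3 (by decide), hne 1 3 (by decide)⟩
      · exact ⟨e 0, e 1, e 2, h0, h1, h2,
          hne 0 1 (by decide), hne 0 2 (by decide), hne 1 2 (by decide)⟩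

lemma interp (ε0 ε1 ε2 A B A' B' : F)
    (h0 : ε0 ≠ 0) (h1 : ε1 ≠ 0) (h2 : ε2 ≠ 0)
    (h01 : ε0 ≠ ε1) (h02 : ε0 ≠ ε2) (h12 : ε1 ≠ ε2) :
    (ε1^3*ε2^3*(ε2-ε1)/((ε1-ε0)*(ε2-ε0)*(ε2-ε1)*ε0^2*ε1^2*ε2^2))
        * ((ε0*A + ε0^2*B) * (ε0*A' + ε0^2*B'))
    + (-(ε0^3*ε2^3*(ε2-ε0))/((ε1-ε0)*(ε2-ε0)*(ε2-ε1)*ε0^2*ε1^2*ε2^2))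
        * ((ε1*A + ε1^2*B) * (ε1*A' + ε1^2*B'))
    + (ε0^3*ε1^3*(ε1-ε0)/((ε1-ε0)*(ε2-ε0)*(ε2-ε1)*ε0^2*ε1^2*ε2^2))
        * ((ε2*A + ε2^2*B) * (ε2*A' + ε2^2*B')) = A * A' := by
  have d01 : ε1 - ε0 ≠ 0 := sub_ne_zero.mpr (Ne.symm h01)
  have d02 : ε2 - ε0 ≠ 0 := sub_ne_zero.mpr (Ne.symm h02)
  have d21 : ε2 - ε1 ≠ 0 := sub_ne_zero.mpr (Ne.symm h12)
  have hD : ((ε1-ε0)*(ε2-ε0)*(ε2-ε1)*ε0^2*ε1^2*ε2^2) ≠ 0 := by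
    apply_rules [mul_ne_zero, pow_ne_zero]
  set D : F := (ε1-ε0)*(ε2-ε0)*(ε2-ε1)*ε0^2*ε1^2*ε2^2 with hDdef
  set d0 : F := ε1^3*ε2^3*(ε2-ε1)/D with hd0
  set d1 : F := -(ε0^3*ε2^3*(ε2-ε0))/D with hd1
  set d2 : F := ε0^3*ε1^3*(ε1-ε0)/D with hd2
  have hs0 : d0*ε0^2 + d1*ε1^2 + d2*ε2^2 = 1 := by
    rw [hd0, hd1, hd2, div_mul_eq_mul_div, div_mul_eq_mul_div, div_mul_eq_mul_div,
      ← add_div, ← add_div, div_eq_iff hD, hDdef]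
    ring
  have hs1 : d0*ε0^3 + d1*ε1^3 + d2*ε2^3 = 0 := by
    rw [hd0, hd1, hd2, div_mul_eq_mul_div, div_mul_eq_mul_div, div_mul_eq_mul_div,
      ← add_div, ← add_div, div_eq_iff hD]
    ring
  have hs2 : d0*ε0^4 + d1*ε1^4 + d2*ε2^4 = 0 := by
    rw [hd0, hd1, hd2, div_mul_eq_mul_div, div_mul_eq_mul_div, div_mul_eq_mul_div,
      ← add_div, ← add_div, div_eq_iff hD]
    ring
  linear_combination (A*A')*hs0 + (A*B' + A'*B)*hs1 + (B*B')*hs2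

/-- The explicit rank-`3(q+1)²` decomposition of `(Str_q^k)^{⊗2}`. -/
def W2 (F : Type v) [Field F] (q m : ℕ) (εv dv : Fin 3 → F) :
    (Fin 3 × (Fin (q+1) × Fin (q+1))) → (Fin 2 × Fin (m+3)) → Fin (q+1) → F :=
  fun j sl y =>
    (if sl.1 = 0 ∧ sl.2 = 0 then dv j.1 else 1) *
    (if sl.1 = 0 then Wfam F q m (εv j.1) j.2.1 sl.2 y
     else Wfam F q m (εv j.1) j.2.2 sl.2 y)

lemma pow_decomp {q m : ℕ} (hk : 3 ≤ m + 3) (εv dv : Fin 3 → F)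
    (hint : ∀ A B A' B' : F,
      (∑ t : Fin 3, dv t * ((εv t * A + εv t^2 * B) * (εv t * A' + εv t^2 * B'))) = A * A') :
    ∀ x, tPow (strTensor F q (m+3) hk) 2 x
      = ∑ j : Fin 3 × (Fin (q+1) × Fin (q+1)),
          ∏ sl : Fin 2 × Fin (m+3), W2 F q m εv dv j sl (x sl) := by
  intro x
  have hL : tPow (strTensor F q (m+3) hk) 2 x
      = strTensor F q (m+3) hk (fun l => x (0, l))
        * strTensor F q (m+3) hk (fun l => x (1, l)) := by
    rw [tPow, Fin.prod_univ_two]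
  have hinner : ∀ t : Fin 3,
      (∑ pp : Fin (q+1) × Fin (q+1),
        ∏ sl : Fin 2 × Fin (m+3), W2 F q m εv dv (t, pp) sl (x sl))
      = dv t * ((∑ p : Fin (q+1), ∏ l, Wfam F q m (εv t) p l (x (0, l)))
               * (∑ p : Fin (q+1), ∏ l, Wfam F q m (εv t) p l (x (1, l)))) := by
    intro t
    have hprod : ∀ pp : Fin (q+1) × Fin (q+1),
        (∏ sl : Fin 2 × Fin (m+3), W2 F q m εv dv (t, pp) sl (x sl))
        = dv t * ((∏ l, Wfam F q m (εv t) pp.1 l (x (0, l)))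
            * (∏ l, Wfam F q m (εv t) pp.2 l (x (1, l)))) := by
      intro pp
      rw [Fintype.prod_prod_type, Fin.prod_univ_two]
      have h0' : (∏ l : Fin (m+3), W2 F q m εv dv (t, pp) (0, l) (x (0, l)))
          = dv t * ∏ l : Fin (m+3), Wfam F q m (εv t) pp.1 l (x (0, l)) := by
        rw [show (fun l : Fin (m+3) => W2 F q m εv dv (t, pp) (0, l) (x (0, l)))
            = fun l => (if l = 0 then dv t else 1)
                * Wfam F q m (εv t) pp.1 l (x (0, l)) from funext fun l => by simp [W2],
          Finset.prod_mul_distrib,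
          Finset.prod_ite_eq' Finset.univ (0 : Fin (m+3)) (fun _ => dv t)]
        simp
      have h1' : (∏ l : Fin (m+3), W2 F q m εv dv (t, pp) (1, l) (x (1, l)))
          = ∏ l : Fin (m+3), Wfam F q m (εv t) pp.2 l (x (1, l)) := by
        refine Finset.prod_congr rfl fun l _ => ?_
        simp [W2]
      rw [h0', h1', mul_assoc]
    rw [Finset.sum_congr rfl fun pp _ => hprod pp, ← Finset.mul_sum]
    congr 1
    rw [Fintype.sum_mul_sum]
    rw [Fintype.sum_prod_type]
  rw [hL, Fintype.sum_prod_type, Finset.sum_congr rfl fun t _ => hinner t]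
  rw [Finset.sum_congr rfl fun t (_ : t ∈ Finset.univ) => by
    rw [Wfam_sum hk (εv t) (fun l => x (0, l)), Wfam_sum hk (εv t) (fun l => x (1, l))]]
  exact (hint (strTensor F q (m+3) hk (fun l => x (0, l))) (Etens F q m (fun l => x (0, l)))
    (strTensor F q (m+3) hk (fun l => x (1, l))) (Etens F q m (fun l => x (1, l)))).symm

end AuxRank





/-- for `q ≥ 7`, `k ≥ 3` (over a sufficiently large field),
`rank((Str_q^k)^{⊗2}) ≤ 3(q+1)² < (2q)² = rank(Str_q^k)²`. -/
theorem rank_str_pow_two {F : Type v} [Field F] (q k : ℕ) (hq : 7 ≤ q) (hk : 3 ≤ k)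
    (hF : Nonempty (Fin 4 ↪ F)) :
    tRank (tPow (strTensor F q k hk) 2) ≤ 3 * (q + 1) ^ 2 ∧
    3 * (q + 1) ^ 2 < (2 * q) ^ 2 ∧
    tRank (strTensor F q k hk) = 2 * q := by
  obtain ⟨m, rfl⟩ : ∃ m, k = m + 3 := ⟨k - 3, by omega⟩
  obtain ⟨e⟩ := hF
  obtain ⟨ε0, ε1, ε2, h0, h1, h2, h01, h02, h12⟩ := exists3 e
  refine ⟨?_, by nlinarith, str_rank_eq hk⟩
  set εv : Fin 3 → F := ![ε0, ε1, ε2] with hεv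
  set dv : Fin 3 → F :=
    ![ε1^3*ε2^3*(ε2-ε1)/((ε1-ε0)*(ε2-ε0)*(ε2-ε1)*ε0^2*ε1^2*ε2^2),
      -(ε0^3*ε2^3*(ε2-ε0))/((ε1-ε0)*(ε2-ε0)*(ε2-ε1)*ε0^2*ε1^2*ε2^2),
      ε0^3*ε1^3*(ε1-ε0)/((ε1-ε0)*(ε2-ε0)*(ε2-ε1)*ε0^2*ε1^2*ε2^2)] with hdv
  have hint : ∀ A B A' B' : F,
      (∑ t : Fin 3, dv t * ((εv t * A + εv t^2 * B) * (εv t * A' + εv t^2 * B'))) = A * A' := by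
    intro A B A' B'
    rw [Fin.sum_univ_three]
    simp only [hεv, hdv, Matrix.cons_val_zero, Matrix.cons_val_one, Matrix.head_cons,
      Matrix.cons_val_two, Matrix.tail_cons]
    exact interp ε0 ε1 ε2 A B A' B' h0 h1 h2 h01 h02 h12
  have hle := tRank_le_card (tPow (strTensor F q (m+3) hk) 2)
    (Fin 3 × (Fin (q+1) × Fin (q+1))) (W2 F q m εv dv) (pow_decomp hk εv dv hint)
  calc tRank (tPow (strTensor F q (m+3) hk) 2)
      ≤ Fintype.card (Fin 3 × (Fin (q+1) × Fin (q+1))) := hle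
    _ = 3 * (q+1)^2 := by
      simp [Fintype.card_prod]
      ring
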